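/- arXiv:1508.00956 — 2 statements merged into one kernel-verified Lean document; each statement's English description precedes it below -/
import Mathlib

section
/- If words σ and τ are adjacent (σ ~ τ), then ω(σ) ≥ ω(τ) − 1. -/
open Filter Finset

/-- A letter of the alphabet `{1,2,3}`. -/
abbrev Letter := Fin 3

/-- A word: a finite (possibly empty) sequence of letters. -/
abbrev Word := List Letter

/-- Adjacency of two words: `σ ≠ τ`, and writing `σ = β ++ σ'`, `τ = β ++ τ'` with `β`
the longest common prefix, either one of `σ'`, `τ'` is empty and the other uses at most two
distinct letters, or `σ' = i j^k` and `τ' = j i^{k'}` for distinct letters `i ≠ j`. -/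
def WordAdj (σ τ : Word) : Prop :=
  σ ≠ τ ∧ ∃ β σ' τ' : Word,
    σ = β ++ σ' ∧ τ = β ++ τ' ∧
    ((σ' = [] ∧ τ'.toFinset.card ≤ 2) ∨
     (τ' = [] ∧ σ'.toFinset.card ≤ 2) ∨
     (∃ (i j : Letter) (k k' : ℕ), i ≠ j ∧
        σ' = i :: List.replicate k j ∧ τ' = j :: List.replicate k' i))

/-- The graph `G_t`: vertices are the words of length at most `t` (all other words are
isolated), with adjacency `WordAdj`. -/
def Gt (t : ℕ) : SimpleGraph Word where
  Adj σ τ := σ.length ≤ t ∧ τ.length ≤ t ∧ WordAdj σ τ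
  symm := by
    constructor
    rintro σ τ ⟨h1, h2, hne, β, σ', τ', e1, e2, h3⟩
    refine ⟨h2, h1, hne.symm, β, τ', σ', e2, e1, ?_⟩
    rcases h3 with h | h | ⟨i, j, k, k', hij, hs, ht⟩
    · exact Or.inr (Or.inl h)
    · exact Or.inl h
    · exact Or.inr (Or.inr ⟨j, i, k', k, hij.symm, ht, hs⟩)
  loopless := ⟨fun σ h => h.2.2.1 rfl⟩

/-- `dW t σ τ` is the geodesic distance `d_t(σ,τ)` in the graph `G_t`. -/
noncomputable def dW (t : ℕ) (σ τ : Word) : ℕ := (Gt t).dist σ τ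

/-- Length of the longest suffix of `σ` using at most two distinct letters. -/
def suffLen (σ : Word) : ℕ :=
  Nat.findGreatest (fun m => (σ.drop (σ.length - m)).toFinset.card ≤ 2) σ.length

/-- `fW σ = τ₂` where `σ = τ₂τ₁` and `τ₁` is the longest suffix of `σ` using at most two
distinct letters; `fW [] = []`. -/
def fW (σ : Word) : Word := σ.take (σ.length - suffLen σ)

/-- `ω(σ)`: the least `n ≥ 0` with `f^[n] σ = ∅`. -/
noncomputable def omegaW (σ : Word) : ℕ := sInf {n : ℕ | fW^[n] σ = []}

/-- `L(σ) = d_{|σ|}(σ, ∅) - 1` for nonempty `σ`, and `L(∅) = 0`. -/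
noncomputable def Lw (σ : Word) : ℕ := if σ = [] then 0 else dW σ.length σ [] - 1

/-- `ᾱ_m`: the average of `L` over the `3^m` words of length `m`. -/
noncomputable def alphaBar (m : ℕ) : ℝ :=
  (∑ v : Fin m → Letter, (Lw (List.ofFn v) : ℝ)) / 3 ^ m

/-- `α* = sup_{m ≥ 1} ᾱ_m / m`. -/
noncomputable def alphaStar : ℝ :=
  sSup {x : ℝ | ∃ m : ℕ, 1 ≤ m ∧ x = alphaBar m / m}

/-- `#V_t = (3^{t+1} - 1)/2`, the number of vertices of `G_t`, as a real number. -/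
noncomputable def Nv (t : ℕ) : ℝ := ((3 : ℝ) ^ (t + 1) - 1) / 2

/-- The sum of `d_t(σ,τ)` over all ordered pairs of words `σ, τ ∈ V_t`
(twice the sum over unordered pairs of distinct words). -/
noncomputable def pairSum (t : ℕ) : ℝ :=
  ∑ k ∈ range (t + 1), ∑ l ∈ range (t + 1),
    ∑ v : Fin k → Letter, ∑ w : Fin l → Letter,
      (dW t (List.ofFn v) (List.ofFn w) : ℝ)

/-- The average path length `D̄(t)` of `G_t`. -/
noncomputable def Dbar (t : ℕ) : ℝ := pairSum t / (Nv t * (Nv t - 1))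

/-- `κ_t = (Σ_{σ ∈ V_t} L(σ)) / #V_t`. -/
noncomputable def kappa (t : ℕ) : ℝ :=
  (∑ k ∈ range (t + 1), ∑ v : Fin k → Letter, (Lw (List.ofFn v) : ℝ)) / Nv t

/-- `π_t`: the sum of `d_t(σ,τ)` over unordered pairs of distinct `σ, τ ∈ V_t`. -/
noncomputable def piT (t : ℕ) : ℝ := pairSum t / 2

/-- `μ_t`: the sum of `d_t(σ,τ)` over unordered pairs of distinct `σ, τ ∈ V_t`
having the same first letter. -/
noncomputable def muT (t : ℕ) : ℝ :=
  (∑ i : Letter, ∑ k ∈ range t, ∑ l ∈ range t,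
    ∑ v : Fin k → Letter, ∑ w : Fin l → Letter,
      (dW t (i :: List.ofFn v) (i :: List.ofFn w) : ℝ)) / 2

/-- `λ_t = Σ_{σ ∈ V_t, σ ≠ ∅} d_t(σ, ∅)`. -/
noncomputable def lambdaT (t : ℕ) : ℝ :=
  ∑ k ∈ Finset.Icc 1 t, ∑ v : Fin k → Letter, (dW t (List.ofFn v) [] : ℝ)

/-- `ν_t = Σ_{i<j} Σ_{|σ'|,|τ'| ≤ t-1} d_t(iσ', jτ')`. -/
noncomputable def nuT (t : ℕ) : ℝ :=
  ∑ i : Letter, ∑ j : Letter,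
    if i < j then
      ∑ k ∈ range t, ∑ l ∈ range t,
        ∑ v : Fin k → Letter, ∑ w : Fin l → Letter,
          (dW t (i :: List.ofFn v) (j :: List.ofFn w) : ℝ)
    else 0

/-- `IsNormalDecomp σ τs`: `τs = [τ₁, …, τ_l]` (with `l ≥ 1`) is a normal decomposition
of `σ`: `σ = τ₁⋯τ_l`; `#τ₁ ≤ 2`, `|τ₁| ≥ 1`; `#τ_i = 2`, `|τ_i| ≥ 2` for `i ≥ 2`; and for
`i < l` the last letter of `τ_i` is the unique letter of the alphabet not appearing
in `τ_{i+1}`. -/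
def IsNormalDecomp (σ : Word) (τs : List Word) : Prop :=
  σ = τs.flatten ∧ τs ≠ [] ∧
  (∀ i : Fin τs.length,
    (i.1 = 0 → 1 ≤ (τs.get i).length ∧ (τs.get i).toFinset.card ≤ 2) ∧
    (1 ≤ i.1 → 2 ≤ (τs.get i).length ∧ (τs.get i).toFinset.card = 2)) ∧
  (∀ i : ℕ, ∀ h : i + 1 < τs.length,
    ∃ c : Letter, (τs.get ⟨i, Nat.lt_of_succ_lt h⟩).getLast? = some c ∧
      c ∉ (τs.get ⟨i + 1, h⟩).toFinset ∧
      ∀ c' : Letter, c' ∉ (τs.get ⟨i + 1, h⟩).toFinset → c' = c)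

/-- `W_{k₁⋯k_l}`: the number of words of length `k₁ + ⋯ + k_l` admitting a normal
decomposition into blocks of lengths `k₁, …, k_l`. -/
noncomputable def Wcount (ks : List ℕ) : ℕ :=
  Nat.card {σ : Word // ∃ τs : List Word, IsNormalDecomp σ τs ∧ τs.map List.length = ks}

/-- `Ē(t) = 3^{-t} Σ_{q ≥ 1} Σ_{k₁ ≥ 1, k₂,…,k_q ≥ 2, k₁+⋯+k_q = t} (q-1)·W_{k₁⋯k_q}`. -/
noncomputable def Ebar (t : ℕ) : ℝ :=
  ((∑ c : Composition t,
      if ∀ i ∈ c.blocks.tail, 2 ≤ i then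
        (c.blocks.length - 1) * Wcount c.blocks
      else 0 : ℕ) : ℝ) / 3 ^ t



lemma card_le_of_prefix {β t : Word} (h : β <+: t) :
    β.toFinset.card ≤ t.toFinset.card := by
  apply Finset.card_le_card
  intro x hx
  simp only [List.mem_toFinset] at *
  exact h.sublist.subset hx

lemma suffLen_pos {σ : Word} (h : σ ≠ []) : 1 ≤ suffLen σ := by
  apply Nat.le_findGreatest (Nat.one_le_iff_ne_zero.2 (by simpa using h))
  calc (σ.drop (σ.length - 1)).toFinset.card ≤ (σ.drop (σ.length - 1)).length :=
        List.toFinset_card_le _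
    _ ≤ 2 := by
        rw [List.length_drop]
        omega

lemma suffLen_le (σ : Word) : suffLen σ ≤ σ.length := Nat.findGreatest_le _

lemma fW_length_lt {σ : Word} (h : σ ≠ []) : (fW σ).length < σ.length := by
  have h1 := suffLen_pos h
  have h0 : 0 < σ.length := List.length_pos_iff.2 h
  simp only [fW, List.length_take]
  omega

lemma exists_iter_nil (σ : Word) : ∃ n, fW^[n] σ = [] := by
  generalize hN : σ.length = N
  induction N using Nat.strong_induction_on generalizing σ with
  | _ N ih =>
    rcases eq_or_ne σ [] with rfl | hσ
    · exact ⟨0, rfl⟩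
    · obtain ⟨n, hn⟩ := ih (fW σ).length (hN ▸ fW_length_lt hσ) (fW σ) rfl
      exact ⟨n + 1, by rwa [Function.iterate_succ_apply]⟩

lemma omegaW_spec (σ : Word) : fW^[omegaW σ] σ = [] :=
  Nat.sInf_mem (exists_iter_nil σ)

lemma omegaW_le {σ : Word} {n : ℕ} (h : fW^[n] σ = []) : omegaW σ ≤ n :=
  Nat.sInf_le h

def Blocks (n : ℕ) (σ : Word) : Prop :=
  ∃ ts : List Word, ts.length = n ∧ σ = ts.flatten ∧ ∀ t ∈ ts, t.toFinset.card ≤ 2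

lemma blocks_prefix {n : ℕ} {σ β : Word} (hb : Blocks n σ) (hp : β <+: σ) :
    Blocks n β := by
  obtain ⟨ts, hlen, rfl, hcard⟩ := hb
  subst hlen
  induction ts generalizing β with
  | nil =>
    simp only [List.flatten_nil, List.prefix_nil] at hp
    exact ⟨[], rfl, by simp [hp], by simp⟩
  | cons t rest ih =>
    simp only [List.flatten_cons] at hp
    by_cases hle : β.length ≤ t.length
    · have hβt : β <+: t :=
        List.prefix_of_prefix_length_le hp (List.prefix_append _ _) hle
      refine ⟨β :: List.replicate rest.length [], by simp, by simp, ?_⟩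
      intro u hu
      rcases List.mem_cons.1 hu with rfl | hu
      · exact le_trans (card_le_of_prefix hβt) (hcard t (by simp))
      · rw [List.eq_of_mem_replicate hu]; simp
    · push_neg at hle
      have htβ : t <+: β :=
        List.prefix_of_prefix_length_le (List.prefix_append _ _) hp hle.le
      obtain ⟨β', rfl⟩ := htβ
      have hβ' : β' <+: rest.flatten := by
        obtain ⟨s, hs⟩ := hp
        rw [List.append_assoc] at hs
        exact ⟨s, List.append_cancel_left hs⟩
      obtain ⟨ts', h1, h2, h3⟩ := ih (fun u hu => hcard u (by simp [hu])) hβ'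
      refine ⟨t :: ts', by simp [h1], by simp [h2], ?_⟩
      intro u hu
      rcases List.mem_cons.1 hu with rfl | hu
      · exact hcard u (by simp)
      · exact h3 u hu

lemma suffix_card_le (σ : Word) : (σ.drop (σ.length - suffLen σ)).toFinset.card ≤ 2 := by
  exact Nat.findGreatest_spec (P := fun m => (σ.drop (σ.length - m)).toFinset.card ≤ 2)
    (m := 0) (Nat.zero_le _) (by simp)

lemma suffLen_ge {σ s : Word} (h : s <:+ σ) (hc : s.toFinset.card ≤ 2) :
    s.length ≤ suffLen σ := by
  have hl : s.length ≤ σ.length := h.length_le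
  apply Nat.le_findGreatest hl
  obtain ⟨p, rfl⟩ := h
  have : (p ++ s).drop ((p ++ s).length - s.length) = s := by
    rw [List.length_append]
    simp [List.drop_append]
  rw [this]
  exact hc

lemma omegaW_nil : omegaW [] = 0 := Nat.le_zero.1 (omegaW_le rfl)

lemma omegaW_succ {σ : Word} (h : σ ≠ []) : omegaW σ = omegaW (fW σ) + 1 := by
  apply le_antisymm
  · exact omegaW_le (by rw [Function.iterate_succ_apply]; exact omegaW_spec (fW σ))
  · have h0 : omegaW σ ≠ 0 := by
      intro h0
      have := omegaW_spec σ
      rw [h0] at this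
      exact h this
    obtain ⟨k, hk⟩ := Nat.exists_eq_succ_of_ne_zero h0
    have : fW^[k] (fW σ) = [] := by
      have := omegaW_spec σ
      rwa [hk, Function.iterate_succ_apply] at this
    have := omegaW_le this
    omega

lemma blocks_omega (σ : Word) : Blocks (omegaW σ) σ := by
  generalize hN : σ.length = N
  induction N using Nat.strong_induction_on generalizing σ with
  | _ N ih =>
    rcases eq_or_ne σ [] with rfl | hσ
    · exact ⟨[], by simp [omegaW_nil], by simp, by simp⟩
    · obtain ⟨ts, h1, h2, h3⟩ := ih (fW σ).length (hN ▸ fW_length_lt hσ) (fW σ) rfl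
      refine ⟨ts ++ [σ.drop (σ.length - suffLen σ)], by simp [h1, omegaW_succ hσ], ?_, ?_⟩
      · rw [List.flatten_append, ← h2]
        simp [fW]
      · intro u hu
        rcases List.mem_append.1 hu with hu | hu
        · exact h3 u hu
        · rw [List.mem_singleton.1 hu]
          exact suffix_card_le σ

lemma iter_nil_of_blocks {n : ℕ} {σ : Word} (h : Blocks n σ) : fW^[n] σ = [] := by
  induction n generalizing σ with
  | zero =>
    obtain ⟨ts, h1, h2, _⟩ := h
    rw [List.length_eq_zero_iff] at h1
    simp [h2, h1]
  | succ n ih =>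
    obtain ⟨ts, h1, rfl, h3⟩ := h
    have hne : ts ≠ [] := by rintro rfl; simp at h1
    obtain ⟨ts0, tl, rfl⟩ : ∃ ts0 tl, ts = ts0 ++ [tl] :=
      ⟨ts.dropLast, ts.getLast hne, (List.dropLast_append_getLast hne).symm⟩
    set σ := (ts0 ++ [tl]).flatten with hσ
    have hflat : σ = ts0.flatten ++ tl := by simp [hσ]
    have htl : tl.length ≤ suffLen σ :=
      suffLen_ge ⟨ts0.flatten, hflat.symm⟩ (h3 tl (by simp))
    have hfp : fW σ <+: ts0.flatten := by
      apply List.prefix_of_prefix_length_le (List.take_prefix _ _)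
        ⟨tl, hflat.symm⟩
      have : σ.length = ts0.flatten.length + tl.length := by
        rw [hflat, List.length_append]
      simp only [fW, List.length_take]
      omega
    have hb0 : Blocks n (fW σ) := by
      apply blocks_prefix _ hfp
      exact ⟨ts0, by simpa using h1, rfl, fun u hu => h3 u (by simp [hu])⟩
    rw [Function.iterate_succ_apply]
    exact ih hb0

lemma omega_le_of_blocks {n : ℕ} {σ : Word} (h : Blocks n σ) : omegaW σ ≤ n :=
  omegaW_le (iter_nil_of_blocks h)

lemma omega_prefix {β σ : Word} (h : β <+: σ) : omegaW β ≤ omegaW σ :=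
  omega_le_of_blocks (blocks_prefix (blocks_omega σ) h)

lemma omega_append_le {β τ' : Word} (h : τ'.toFinset.card ≤ 2) :
    omegaW (β ++ τ') ≤ omegaW β + 1 := by
  obtain ⟨ts, h1, h2, h3⟩ := blocks_omega β
  apply omega_le_of_blocks
  refine ⟨ts ++ [τ'], by simp [h1], by simp [← h2], ?_⟩
  intro u hu
  rcases List.mem_append.1 hu with hu | hu
  · exact h3 u hu
  · rw [List.mem_singleton.1 hu]; exact h

lemma key (σ τ : Word) (hcase : ∃ β σ' τ' : Word,
    σ = β ++ σ' ∧ τ = β ++ τ' ∧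
    ((σ' = [] ∧ τ'.toFinset.card ≤ 2) ∨
     (τ' = [] ∧ σ'.toFinset.card ≤ 2) ∨
     (∃ (i j : Letter) (k k' : ℕ), i ≠ j ∧
        σ' = i :: List.replicate k j ∧ τ' = j :: List.replicate k' i))) :
    omegaW τ ≤ omegaW σ + 1 := by
  obtain ⟨β, σ', τ', rfl, rfl, hc⟩ := hcase
  rcases hc with ⟨rfl, hc⟩ | ⟨rfl, _⟩ | ⟨i, j, k, k', -, rfl, rfl⟩
  · simpa using omega_append_le hc
  · have := omega_prefix (σ := β ++ σ') (List.prefix_append _ _)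
    simpa using Nat.le_succ_of_le this
  · have hc : (j :: List.replicate k' i).toFinset.card ≤ 2 := by
      calc (j :: List.replicate k' i).toFinset.card ≤ ({j, i} : Finset Letter).card := by
            apply Finset.card_le_card
            intro x hx
            simp only [List.mem_toFinset, List.mem_cons] at hx
            rcases hx with rfl | hx
            · simp
            · simp [List.eq_of_mem_replicate hx]
        _ ≤ 2 := Finset.card_le_two
    calc omegaW (β ++ (j :: List.replicate k' i)) ≤ omegaW β + 1 := omega_append_le hc
      _ ≤ omegaW (β ++ (i :: List.replicate k j)) + 1 :=
          Nat.add_le_add_right (omega_prefix (List.prefix_append _ _)) 1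


/-- If words `σ` and `τ` are adjacent (`σ ~ τ`), then `ω(σ) ≥ ω(τ) − 1`. -/
theorem omega_ge_of_adj (σ τ : Word) (h : WordAdj σ τ) :
    (omegaW τ : ℤ) - 1 ≤ (omegaW σ : ℤ) := by
  have := key σ τ h.2
  omega
end

section
/- For all integers k₁, k₂ ≥ 1, ᾱ_{k₁} + ᾱ_{k₂} ≤ ᾱ_{k₁+k₂} ≤ ᾱ_{k₁} + ᾱ_{k₂} + 1. In particular the sequence (ᾱ_k) is non-decreasing, and for all positive integers q and k one has ᾱ_k ≥ ᾱ_q·⌊k/q⌋ ≥ (ᾱ_q/q)(k − q + 1). -/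
open Filter Finset

namespace Aux

lemma card2_of_subset {ρ σ : Word} (h : ρ ⊆ σ) (hσ : σ.toFinset.card ≤ 2) :
    ρ.toFinset.card ≤ 2 :=
  le_trans (Finset.card_le_card fun x hx => by
    simp only [List.mem_toFinset] at *; exact h hx) hσ

def Pprop (σ : Word) (m : ℕ) : Prop := (σ.drop (σ.length - m)).toFinset.card ≤ 2

lemma Pprop_zero (σ : Word) : Pprop σ 0 := by simp [Pprop]

lemma Pprop_one (σ : Word) : Pprop σ 1 := by
  have h : (σ.drop (σ.length - 1)).length ≤ 1 := by
    simp only [List.length_drop]; omega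
  exact le_trans (le_trans (List.toFinset_card_le _) h) one_le_two

lemma Pprop_anti {σ : Word} {m m' : ℕ} (h : m' ≤ m) (hP : Pprop σ m) : Pprop σ m' := by
  have he : σ.drop (σ.length - m') =
      (σ.drop (σ.length - m)).drop ((σ.length - m') - (σ.length - m)) := by
    rw [List.drop_drop]; congr 1; omega
  unfold Pprop at *
  rw [he]
  exact card2_of_subset (List.drop_suffix _ _).subset hP

lemma suffLen_le (σ : Word) : suffLen σ ≤ σ.length := Nat.findGreatest_le _

lemma Pprop_suffLen (σ : Word) : Pprop σ (suffLen σ) :=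
  Nat.findGreatest_spec (m := 0) (Nat.zero_le _) (Pprop_zero σ)

lemma one_le_suffLen {σ : Word} (h : σ ≠ []) : 1 ≤ suffLen σ :=
  Nat.le_findGreatest (by have := List.length_pos_iff.mpr h; omega) (Pprop_one σ)

lemma le_suffLen {σ : Word} {m : ℕ} (hm : m ≤ σ.length) (hP : Pprop σ m) : m ≤ suffLen σ :=
  Nat.le_findGreatest hm hP

lemma fW_length (σ : Word) : (fW σ).length = σ.length - suffLen σ := by
  simp [fW]

lemma fW_prefix (σ : Word) : fW σ <+: σ := List.take_prefix _ _

lemma fW_length_lt {σ : Word} (h : σ ≠ []) : (fW σ).length < σ.length := by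
  rw [fW_length]
  have h1 := one_le_suffLen h
  have h2 := List.length_pos_iff.mpr h
  omega

lemma fW_append (σ : Word) : fW σ ++ σ.drop (σ.length - suffLen σ) = σ :=
  List.take_append_drop _ _

lemma omega_exists (σ : Word) : ∃ n, fW^[n] σ = [] := by
  obtain ⟨N, hN⟩ : ∃ N, σ.length ≤ N := ⟨_, le_rfl⟩
  induction N generalizing σ with
  | zero => exact ⟨0, by simpa using List.length_eq_zero_iff.mp (Nat.le_zero.mp hN)⟩
  | succ N ih =>
    by_cases h : σ = []
    · exact ⟨0, by simp [h]⟩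
    · obtain ⟨n, hn⟩ := ih (fW σ) (by have := fW_length_lt h; omega)
      exact ⟨n + 1, by rw [Function.iterate_succ_apply]; exact hn⟩

lemma omegaW_nil : omegaW [] = 0 :=
  Nat.sInf_eq_zero.mpr (Or.inl (by simp [Set.mem_setOf_eq]))

lemma omegaW_succ {σ : Word} (h : σ ≠ []) : omegaW σ = omegaW (fW σ) + 1 := by
  have h1 : {n : ℕ | fW^[n] (fW σ) = []}.Nonempty := omega_exists (fW σ)
  have h2 : {n : ℕ | fW^[n] σ = []}.Nonempty := omega_exists σ
  have hm : fW^[omegaW (fW σ)] (fW σ) = [] := Nat.sInf_mem h1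
  have hub : omegaW σ ≤ omegaW (fW σ) + 1 := by
    apply Nat.sInf_le
    simp only [Set.mem_setOf_eq, Function.iterate_succ_apply]
    exact hm
  have hσm : fW^[omegaW σ] σ = [] := Nat.sInf_mem h2
  have h0 : omegaW σ ≠ 0 := by
    intro h0
    rw [h0] at hσm
    exact h (by simpa using hσm)
  obtain ⟨k, hk⟩ := Nat.exists_eq_succ_of_ne_zero h0
  have hkm : fW^[k] (fW σ) = [] := by
    rw [hk, Function.iterate_succ_apply] at hσm; exact hσm
  have : omegaW (fW σ) ≤ k := Nat.sInf_le hkm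
  omega

lemma one_le_omegaW {σ : Word} (h : σ ≠ []) : 1 ≤ omegaW σ := by
  rw [omegaW_succ h]; omega


-- the stripped suffix of σ has card ≤ 2, phrased via (fW σ).length
lemma card2_drop_fW (σ : Word) : (σ.drop ((fW σ).length)).toFinset.card ≤ 2 := by
  rw [fW_length]
  exact Pprop_suffLen σ

lemma omegaW_prefix {σ α : Word} (hpre : α <+: σ) : omegaW α ≤ omegaW σ := by
  suffices H : ∀ (N : ℕ) (σ α : Word), σ.length ≤ N → α <+: σ → omegaW α ≤ omegaW σ from
    H σ.length σ α le_rfl hpre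
  clear hpre σ α
  intro N
  induction N with
  | zero =>
    intro σ α h1 h2
    have hσ : σ = [] := List.length_eq_zero_iff.mp (Nat.le_zero.mp h1)
    subst hσ
    rw [List.prefix_nil.mp h2]
  | succ N ih =>
    intro σ α h1 h2
    by_cases hσ : σ = []
    · subst hσ; rw [List.prefix_nil.mp h2]
    by_cases hα : α = []
    · subst hα; rw [omegaW_nil]; exact Nat.zero_le _
    rcases le_or_gt α.length (fW σ).length with hle | hlt
    · have hp : α <+: fW σ := List.prefix_of_prefix_length_le h2 (fW_prefix σ) hle
      have := ih (fW σ) α (by have := fW_length_lt hσ; omega) hp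
      rw [omegaW_succ hσ]; omega
    · -- show suffLen α ≥ α.length - (fW σ).length
      have hαlen : α.length ≤ σ.length := h2.length_le
      obtain ⟨ρ, hρ⟩ := h2
      set k := (fW σ).length with hk
      have key : Pprop α (α.length - k) := by
        unfold Pprop
        have hd : α.length - (α.length - k) = k := by omega
        rw [hd]
        have hds : σ.drop k = α.drop k ++ ρ := by
          rw [← hρ]; exact List.drop_append_of_le_length (by omega)
        have hsub : α.drop k ⊆ σ.drop k := by
          rw [hds]; exact fun x hx => List.mem_append_left _ hx
        exact card2_of_subset hsub (card2_drop_fW σ)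
      have hsl : α.length - k ≤ suffLen α := le_suffLen (by omega) key
      have hfl : (fW α).length ≤ (fW σ).length := by rw [fW_length, ← hk]; omega
      have hfp : fW α <+: fW σ :=
        List.prefix_of_prefix_length_le ((fW_prefix α).trans ⟨ρ, hρ⟩) (fW_prefix σ) hfl
      have := ih (fW σ) (fW α) (by have := fW_length_lt hσ; omega) hfp
      rw [omegaW_succ hσ, omegaW_succ hα]
      omega

lemma omegaW_append_card2 {α ρ : Word} (hρ : ρ ≠ []) (hc : ρ.toFinset.card ≤ 2) :
    omegaW (α ++ ρ) ≤ omegaW α + 1 := by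
  have hσ : α ++ ρ ≠ [] := by simp [hρ]
  have hP : Pprop (α ++ ρ) ρ.length := by
    unfold Pprop
    have h1 : (α ++ ρ).length - ρ.length = α.length := by simp
    rw [h1, List.drop_left]
    exact hc
  have h1 : ρ.length ≤ suffLen (α ++ ρ) :=
    le_suffLen (by simp only [List.length_append]; omega) hP
  have h2 : (fW (α ++ ρ)).length ≤ α.length := by
    rw [fW_length]; simp only [List.length_append]; omega
  have h3 : fW (α ++ ρ) <+: α :=
    List.prefix_of_prefix_length_le (fW_prefix _) ⟨ρ, rfl⟩ h2
  rw [omegaW_succ hσ]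
  exact Nat.add_le_add_right (omegaW_prefix h3) 1

lemma omegaW_adj {σ τ : Word} (h : WordAdj σ τ) : omegaW σ ≤ omegaW τ + 1 := by
  obtain ⟨hne, β, σ', τ', rfl, rfl, hcase⟩ := h
  rcases hcase with ⟨h1, h2⟩ | ⟨h1, h2⟩ | ⟨i, j, k, k', hij, rfl, rfl⟩
  · subst h1
    simp only [List.append_nil]
    exact le_trans (omegaW_prefix ⟨τ', rfl⟩) (Nat.le_succ _)
  · subst h1
    simp only [List.append_nil]
    by_cases hσ' : σ' = []
    · subst hσ'; simp
    · exact omegaW_append_card2 hσ' h2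
  · have hc : (i :: List.replicate k j).toFinset.card ≤ 2 := by
      have hsub : (i :: List.replicate k j).toFinset ⊆ {i, j} := by
        intro x hx
        simp only [List.toFinset_cons, Finset.mem_insert, List.mem_toFinset,
          List.mem_replicate] at hx
        rcases hx with h | ⟨-, h⟩ <;> simp [h]
      exact le_trans (Finset.card_le_card hsub)
        (le_trans (Finset.card_insert_le _ _) (by simp))
    calc omegaW (β ++ i :: List.replicate k j) ≤ omegaW β + 1 :=
          omegaW_append_card2 (List.cons_ne_nil _ _) hc
      _ ≤ omegaW (β ++ j :: List.replicate k' i) + 1 :=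
          Nat.add_le_add_right (omegaW_prefix ⟨_, rfl⟩) 1

lemma exists_walk {t : ℕ} {σ : Word} (h : σ.length ≤ t) :
    ∃ p : (Gt t).Walk σ [], p.length = omegaW σ := by
  suffices H : ∀ (N : ℕ) (σ : Word), σ.length ≤ N → σ.length ≤ t →
      ∃ p : (Gt t).Walk σ [], p.length = omegaW σ from H σ.length σ le_rfl h
  clear h σ
  intro N
  induction N with
  | zero =>
    intro σ h1 _
    have hσ : σ = [] := List.length_eq_zero_iff.mp (Nat.le_zero.mp h1)
    subst hσ
    exact ⟨SimpleGraph.Walk.nil, by simp [omegaW_nil]⟩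
  | succ N ih =>
    intro σ h1 ht
    by_cases hσ : σ = []
    · subst hσ; exact ⟨SimpleGraph.Walk.nil, by simp [omegaW_nil]⟩
    · have hlt := fW_length_lt hσ
      have hadj : (Gt t).Adj σ (fW σ) := by
        show σ.length ≤ t ∧ (fW σ).length ≤ t ∧ WordAdj σ (fW σ)
        refine ⟨ht, by omega, ?_, fW σ, σ.drop (σ.length - suffLen σ), [], ?_, by simp, ?_⟩
        · intro he
          have := congrArg List.length he
          omega
        · exact (List.take_append_drop _ _).symm
        · refine Or.inr (Or.inl ⟨rfl, ?_⟩)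
          have := card2_drop_fW σ
          rwa [fW_length] at this
      obtain ⟨p, hp⟩ := ih (fW σ) (by omega) (by omega)
      exact ⟨SimpleGraph.Walk.cons hadj p, by
        simp [SimpleGraph.Walk.length_cons, hp, (omegaW_succ hσ).symm]⟩

lemma omegaW_le_walk {t : ℕ} {σ τ : Word} (p : (Gt t).Walk σ τ) :
    omegaW σ ≤ omegaW τ + p.length := by
  induction p with
  | nil => simp
  | cons h p ih =>
    have := omegaW_adj (show _ ∧ _ ∧ WordAdj _ _ from h).2.2
    simp only [SimpleGraph.Walk.length_cons]
    omega

lemma dW_eq_omegaW {t : ℕ} {σ : Word} (h : σ.length ≤ t) : dW t σ [] = omegaW σ := by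
  obtain ⟨p, hp⟩ := exists_walk h
  have h1 : (Gt t).dist σ [] ≤ omegaW σ := hp ▸ SimpleGraph.dist_le p
  have hr : (Gt t).Reachable σ [] := ⟨p⟩
  obtain ⟨q, hq⟩ := hr.exists_walk_length_eq_dist
  have h2 := omegaW_le_walk q
  rw [omegaW_nil] at h2
  unfold dW
  omega

lemma Lw_eq {σ : Word} (h : σ ≠ []) : Lw σ = omegaW σ - 1 := by
  rw [Lw, if_neg h, dW_eq_omegaW le_rfl]

lemma omegaW_one {τ : Word} (hτ : τ ≠ []) (hc : τ.toFinset.card ≤ 2) : omegaW τ = 1 := by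
  have h1 : suffLen τ = τ.length := by
    refine le_antisymm (suffLen_le τ) (le_suffLen le_rfl ?_)
    unfold Pprop
    simpa using hc
  have h2 : fW τ = [] := by
    have := fW_length τ
    rw [h1] at this
    simp only [Nat.sub_self] at this
    exact List.length_eq_zero_iff.mp this
  rw [omegaW_succ hτ, h2, omegaW_nil]

lemma omegaW_append {σ τ : Word} (hσ : σ ≠ []) (hτ : τ ≠ []) :
    omegaW σ + omegaW τ - 1 ≤ omegaW (σ ++ τ) ∧ omegaW (σ ++ τ) ≤ omegaW σ + omegaW τ := by
  suffices H : ∀ (N : ℕ) (τ σ : Word), τ.length ≤ N → σ ≠ [] → τ ≠ [] →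
      omegaW σ + omegaW τ - 1 ≤ omegaW (σ ++ τ) ∧ omegaW (σ ++ τ) ≤ omegaW σ + omegaW τ from
    H τ.length τ σ le_rfl hσ hτ
  clear hσ hτ σ τ
  intro N
  induction N with
  | zero =>
    intro τ σ h1 _ hτ
    exact absurd (List.length_eq_zero_iff.mp (Nat.le_zero.mp h1)) hτ
  | succ N ih =>
    intro τ σ h1 hσ hτ
    have hστ : σ ++ τ ≠ [] := by simp [hσ]
    rcases lt_or_ge (suffLen (σ ++ τ)) τ.length with hlt | hge
    · -- the stripped suffix lies inside τ
      have hdropeq : ∀ m : ℕ, m ≤ τ.length →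
          (σ ++ τ).drop ((σ ++ τ).length - m) = τ.drop (τ.length - m) := by
        intro m hm
        have h2 : (σ ++ τ).length - m = σ.length + (τ.length - m) := by
          simp only [List.length_append]; omega
        rw [h2, List.drop_length_add_append]
      have hPiff : ∀ m : ℕ, m ≤ τ.length → (Pprop (σ ++ τ) m ↔ Pprop τ m) := by
        intro m hm
        unfold Pprop
        rw [hdropeq m hm]
      have hst : suffLen τ = suffLen (σ ++ τ) := by
        refine le_antisymm ?_ ?_
        · refine le_suffLen (by have := suffLen_le τ; simp only [List.length_append]; omega) ?_
          exact (hPiff _ (suffLen_le τ)).mpr (Pprop_suffLen τ)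
        · exact le_suffLen (le_of_lt hlt) ((hPiff _ (le_of_lt hlt)).mp (Pprop_suffLen _))
      have hfw : fW (σ ++ τ) = σ ++ fW τ := by
        unfold fW
        rw [← hst]
        have h2 : (σ ++ τ).length - suffLen τ = σ.length + (τ.length - suffLen τ) := by
          simp only [List.length_append]
          have := suffLen_le τ
          omega
        rw [h2, List.take_length_add_append]
      have hfτ : fW τ ≠ [] := by
        have h2 := fW_length τ
        rw [← hst] at hlt
        intro he
        rw [he] at h2
        simp only [List.length_nil] at h2
        omega
      obtain ⟨hl, hr⟩ := ih (fW τ) σ (by have := fW_length_lt hτ; omega) hσ hfτ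
      have e1 : omegaW (σ ++ τ) = omegaW (σ ++ fW τ) + 1 := by
        rw [omegaW_succ hστ, hfw]
      have e2 : omegaW τ = omegaW (fW τ) + 1 := omegaW_succ hτ
      have hσ1 := one_le_omegaW hσ
      constructor <;> omega
    · -- τ itself uses at most two letters
      have hPτ : Pprop (σ ++ τ) τ.length := Pprop_anti hge (Pprop_suffLen _)
      have hcτ : τ.toFinset.card ≤ 2 := by
        unfold Pprop at hPτ
        have h2 : (σ ++ τ).length - τ.length = σ.length := by simp
        rw [h2, List.drop_left] at hPτ
        exact hPτ
      have hω1 : omegaW τ = 1 := omegaW_one hτ hcτ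
      have hub : omegaW (σ ++ τ) ≤ omegaW σ + 1 := omegaW_append_card2 hτ hcτ
      have hlb : omegaW σ ≤ omegaW (σ ++ τ) := omegaW_prefix ⟨τ, rfl⟩
      constructor <;> omega

lemma Lw_append {σ τ : Word} (hσ : σ ≠ []) (hτ : τ ≠ []) :
    Lw σ + Lw τ ≤ Lw (σ ++ τ) ∧ Lw (σ ++ τ) ≤ Lw σ + Lw τ + 1 := by
  have h1 := omegaW_append hσ hτ
  have h2 := one_le_omegaW hσ
  have h3 := one_le_omegaW hτ
  have h4 : σ ++ τ ≠ [] := by simp [hσ]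
  rw [Lw_eq hσ, Lw_eq hτ, Lw_eq h4]
  omega

noncomputable def Sw (k : ℕ) : ℝ := ∑ v : Fin k → Letter, (Lw (List.ofFn v) : ℝ)

lemma alphaBar_eq (m : ℕ) : alphaBar m = Sw m / 3 ^ m := rfl

def splitEquiv (k₁ k₂ : ℕ) : ((Fin k₁ → Letter) × (Fin k₂ → Letter)) ≃ (Fin (k₁ + k₂) → Letter) :=
  (Equiv.sumArrowEquivProdArrow (Fin k₁) (Fin k₂) Letter).symm.trans
    (Equiv.arrowCongr finSumFinEquiv (Equiv.refl Letter))

lemma splitEquiv_ofFn {k₁ k₂ : ℕ} (v : Fin k₁ → Letter) (w : Fin k₂ → Letter) :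
    List.ofFn (splitEquiv k₁ k₂ (v, w)) = List.ofFn v ++ List.ofFn w := by
  rw [List.ofFn_add]
  congr 1
  · congr 1
    funext i
    simp [splitEquiv, Equiv.arrowCongr, Equiv.sumArrowEquivProdArrow,
      finSumFinEquiv_symm_apply_castAdd]
    exact congrArg (Sum.elim v w) (finSumFinEquiv_symm_apply_castAdd i)
  · congr 1
    funext i
    simp [splitEquiv, Equiv.arrowCongr, Equiv.sumArrowEquivProdArrow,
      finSumFinEquiv_symm_apply_natAdd]

lemma sum_split (k₁ k₂ : ℕ) (g : Word → ℝ) :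
    ∑ u : Fin (k₁ + k₂) → Letter, g (List.ofFn u)
      = ∑ v : Fin k₁ → Letter, ∑ w : Fin k₂ → Letter, g (List.ofFn v ++ List.ofFn w) := by
  rw [← Equiv.sum_comp (splitEquiv k₁ k₂) (fun u => g (List.ofFn u)), Fintype.sum_prod_type]
  exact Finset.sum_congr rfl fun v _ => Finset.sum_congr rfl fun w _ => by
    rw [splitEquiv_ofFn]

lemma card_fun (k : ℕ) : (Fintype.card (Fin k → Letter) : ℝ) = 3 ^ k := by
  simp [Fintype.card_fun]

lemma alphaBar_nonneg (m : ℕ) : 0 ≤ alphaBar m :=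
  div_nonneg (Finset.sum_nonneg fun _ _ => Nat.cast_nonneg _) (by positivity)

lemma alphaBar_add {k₁ k₂ : ℕ} (h1 : 1 ≤ k₁) (h2 : 1 ≤ k₂) :
    alphaBar k₁ + alphaBar k₂ ≤ alphaBar (k₁ + k₂) ∧
    alphaBar (k₁ + k₂) ≤ alphaBar k₁ + alphaBar k₂ + 1 := by
  have hne : ∀ (k : ℕ), 1 ≤ k → ∀ v : Fin k → Letter, List.ofFn v ≠ [] := by
    intro k hk v hv
    have := congrArg List.length hv
    simp at this
    omega
  have key : Sw k₁ * 3 ^ k₂ + Sw k₂ * 3 ^ k₁ ≤ Sw (k₁ + k₂) ∧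
      Sw (k₁ + k₂) ≤ Sw k₁ * 3 ^ k₂ + Sw k₂ * 3 ^ k₁ + 3 ^ (k₁ + k₂) := by
    have hsplit := sum_split k₁ k₂ (fun σ => (Lw σ : ℝ))
    have hL : Sw (k₁ + k₂) = ∑ v : Fin k₁ → Letter, ∑ w : Fin k₂ → Letter,
        (Lw (List.ofFn v ++ List.ofFn w) : ℝ) := hsplit
    constructor
    · rw [hL]
      have : Sw k₁ * 3 ^ k₂ + Sw k₂ * 3 ^ k₁
          = ∑ v : Fin k₁ → Letter, ∑ w : Fin k₂ → Letter,
              ((Lw (List.ofFn v) : ℝ) + (Lw (List.ofFn w) : ℝ)) := by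
        simp only [Finset.sum_add_distrib, Finset.sum_const, Finset.card_univ,
          nsmul_eq_mul, ← Finset.mul_sum, Sw]
        push_cast [Fintype.card_fun, Fintype.card_fin]
        ring
      rw [this]
      refine Finset.sum_le_sum fun v _ => Finset.sum_le_sum fun w _ => ?_
      have := (Lw_append (hne k₁ h1 v) (hne k₂ h2 w)).1
      exact_mod_cast this
    · rw [hL]
      have : Sw k₁ * 3 ^ k₂ + Sw k₂ * 3 ^ k₁ + 3 ^ (k₁ + k₂)
          = ∑ v : Fin k₁ → Letter, ∑ w : Fin k₂ → Letter,
              ((Lw (List.ofFn v) : ℝ) + (Lw (List.ofFn w) : ℝ) + 1) := by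
        simp only [Finset.sum_add_distrib, Finset.sum_const, Finset.card_univ,
          nsmul_eq_mul, ← Finset.mul_sum, Sw]
        push_cast [Fintype.card_fun, Fintype.card_fin]
        ring
      rw [this]
      refine Finset.sum_le_sum fun v _ => Finset.sum_le_sum fun w _ => ?_
      have := (Lw_append (hne k₁ h1 v) (hne k₂ h2 w)).2
      exact_mod_cast this
  have hpos : (0:ℝ) < 3 ^ (k₁ + k₂) := by positivity
  have heq : alphaBar k₁ + alphaBar k₂
      = (Sw k₁ * 3 ^ k₂ + Sw k₂ * 3 ^ k₁) / 3 ^ (k₁ + k₂) := by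
    rw [alphaBar_eq, alphaBar_eq, pow_add]
    field_simp
    try ring
  have heq2 : alphaBar k₁ + alphaBar k₂ + 1
      = (Sw k₁ * 3 ^ k₂ + Sw k₂ * 3 ^ k₁ + 3 ^ (k₁ + k₂)) / 3 ^ (k₁ + k₂) := by
    rw [alphaBar_eq, alphaBar_eq, pow_add]
    field_simp
    try ring
  constructor
  · rw [heq, alphaBar_eq]
    exact (div_le_div_iff_of_pos_right hpos).mpr key.1
  · rw [heq2, alphaBar_eq]
    exact (div_le_div_iff_of_pos_right hpos).mpr key.2

lemma alphaBar_zero : alphaBar 0 = 0 := by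
  simp [alphaBar, Lw]

lemma alphaBar_mono_succ (k : ℕ) : alphaBar k ≤ alphaBar (k + 1) := by
  rcases Nat.eq_zero_or_pos k with rfl | hk
  · rw [alphaBar_zero]; exact alphaBar_nonneg 1
  · have h := (alphaBar_add hk le_rfl).1
    have := alphaBar_nonneg 1
    linarith

lemma alphaBar_mono : Monotone alphaBar := monotone_nat_of_le_succ alphaBar_mono_succ

lemma alphaBar_mul {q : ℕ} (hq : 1 ≤ q) : ∀ m : ℕ, 1 ≤ m → (m : ℝ) * alphaBar q ≤ alphaBar (m * q) := by
  intro m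
  induction m with
  | zero => omega
  | succ m ih =>
    intro _
    rcases Nat.eq_zero_or_pos m with rfl | hm
    · simp
    · have h1 := ih hm
      have h2 := (alphaBar_add (k₁ := m * q) (k₂ := q) (Nat.one_le_iff_ne_zero.mpr (by positivity)) hq).1
      push_cast
      have : (m + 1) * q = m * q + q := by ring
      rw [this]
      nlinarith [alphaBar_nonneg q]

end Aux

/-- For `k₁, k₂ ≥ 1`, `ᾱ_{k₁} + ᾱ_{k₂} ≤ ᾱ_{k₁+k₂} ≤ ᾱ_{k₁} + ᾱ_{k₂} + 1`; in particular
`(ᾱ_k)` is non-decreasing, and for positive integers `q, k`,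
`ᾱ_k ≥ ᾱ_q·⌊k/q⌋ ≥ (ᾱ_q/q)(k − q + 1)`. -/
theorem alphaBar_superadditive :
    (∀ k₁ k₂ : ℕ, 1 ≤ k₁ → 1 ≤ k₂ →
      alphaBar k₁ + alphaBar k₂ ≤ alphaBar (k₁ + k₂) ∧
      alphaBar (k₁ + k₂) ≤ alphaBar k₁ + alphaBar k₂ + 1) ∧
    (∀ k : ℕ, alphaBar k ≤ alphaBar (k + 1)) ∧
    (∀ q k : ℕ, 1 ≤ q → 1 ≤ k →
      alphaBar q * ((k / q : ℕ) : ℝ) ≤ alphaBar k ∧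
      (alphaBar q / q) * ((k : ℝ) - q + 1) ≤ alphaBar q * ((k / q : ℕ) : ℝ)) := by
  refine ⟨fun k₁ k₂ h1 h2 => Aux.alphaBar_add h1 h2, Aux.alphaBar_mono_succ, fun q k hq hk => ?_⟩
  set m := k / q with hm
  have hmq : m * q ≤ k := by rw [hm]; exact Nat.div_mul_le_self k q
  have hqpos : (0:ℝ) < q := by exact_mod_cast hq
  constructor
  · rcases Nat.eq_zero_or_pos m with hm0 | hm1
    · rw [hm0]; simpa using Aux.alphaBar_nonneg k
    · have h1 := Aux.alphaBar_mul hq m hm1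
      have h2 := Aux.alphaBar_mono hmq
      calc alphaBar q * (m : ℝ) = (m : ℝ) * alphaBar q := by ring
        _ ≤ alphaBar (m * q) := h1
        _ ≤ alphaBar k := h2
  · have hmod := Nat.div_add_mod k q
    have hmodlt : k % q < q := Nat.mod_lt k hq
    have h2 : q * m + k % q = k := by rw [hm]; exact hmod
    have hnat : k + 1 ≤ m * q + q := by rw [Nat.mul_comm m q]; omega
    have hle : (k : ℝ) - q + 1 ≤ (m : ℝ) * q := by
      have : ((k : ℕ) : ℝ) + 1 ≤ ((m * q + q : ℕ) : ℝ) := by exact_mod_cast hnat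
      push_cast at this
      linarith
    have hαq := Aux.alphaBar_nonneg q
    calc alphaBar q / q * ((k : ℝ) - q + 1) ≤ alphaBar q / q * ((m : ℝ) * q) := by
          apply mul_le_mul_of_nonneg_left hle (by positivity)
      _ = alphaBar q * (m : ℝ) := by field_simp
end
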